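/- For the logistic loss ℓ(z) = log(1 + e^{-z}), for all real x and z with |z − x| < 1, we have 0 ≤ ℓ(z) − ℓ(x) − ℓ'(x)(z − x) ≤ 2ℓ(x)(z − x)². -/

import Mathlib

open Real

noncomputable def logisticLoss (z : ℝ) : ℝ := Real.log (1 + Real.exp (-z))

noncomputable def llD (t : ℝ) : ℝ := -1 / (1 + Real.exp t)

lemma hasDerivAt_ll (t : ℝ) : HasDerivAt logisticLoss (llD t) t := by
  have h1 : HasDerivAt (fun s : ℝ => 1 + Real.exp (-s)) (-Real.exp (-t)) t := by
    simpa using (((Real.hasDerivAt_exp (-t)).comp t ((hasDerivAt_id t).neg)).const_add 1)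
  have hpos : (0:ℝ) < 1 + Real.exp (-t) := by positivity
  have h2 := h1.log hpos.ne'
  have heq : -Real.exp (-t) / (1 + Real.exp (-t)) = llD t := by
    unfold llD
    rw [Real.exp_neg]
    have h3 : (0:ℝ) < Real.exp t := Real.exp_pos t
    field_simp
    ring
  rw [heq] at h2
  exact h2

lemma deriv_ll : deriv logisticLoss = llD := funext fun t => (hasDerivAt_ll t).deriv


lemma ll_nonneg (x : ℝ) : 0 ≤ logisticLoss x :=
  Real.log_nonneg (by nlinarith [Real.exp_pos (-x)])

lemma inv_le_ll (x : ℝ) : 1 / (1 + Real.exp x) ≤ logisticLoss x := by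
  have hpos : (0:ℝ) < 1 + Real.exp (-x) := by positivity
  have h := Real.log_le_sub_one_of_pos (show (0:ℝ) < (1 + Real.exp (-x))⁻¹ by positivity)
  rw [Real.log_inv] at h
  have h2 : 1 - (1 + Real.exp (-x))⁻¹ ≤ logisticLoss x := by unfold logisticLoss; linarith
  have hx : Real.exp (-x) = (Real.exp x)⁻¹ := Real.exp_neg x
  have hex : (0:ℝ) < Real.exp x := Real.exp_pos x
  have key : 1 / (1 + Real.exp x) = 1 - (1 + Real.exp (-x))⁻¹ := by
    rw [hx]; field_simp; ring
  linarith [key ▸ h2]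

lemma llD_sub (x t : ℝ) : llD t - llD x
    = (Real.exp t - Real.exp x) / ((1 + Real.exp x) * (1 + Real.exp t)) := by
  unfold llD
  have h1 : (0:ℝ) < 1 + Real.exp x := by positivity
  have h2 : (0:ℝ) < 1 + Real.exp t := by positivity
  field_simp
  ring

lemma llD_mono : Monotone llD := by
  intro s t hst
  have h := llD_sub s t
  have h1 : (0:ℝ) < 1 + Real.exp s := by positivity
  have h2 : (0:ℝ) < 1 + Real.exp t := by positivity
  have h3 : Real.exp s ≤ Real.exp t := Real.exp_le_exp.2 hst
  have : 0 ≤ llD t - llD s := by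
    rw [h]; apply div_nonneg (by linarith) (by positivity)
  linarith

lemma key_bound (x t : ℝ) (h : |t - x| ≤ 1) :
    |llD t - llD x| ≤ 4 * logisticLoss x * |t - x| := by
  have ha : (0:ℝ) < Real.exp x := Real.exp_pos x
  have hb : (0:ℝ) < Real.exp t := Real.exp_pos t
  have h1 : (0:ℝ) < 1 + Real.exp x := by positivity
  have h2 : (0:ℝ) < 1 + Real.exp t := by positivity
  have hL := ll_nonneg x
  have hL1 : 1 ≤ logisticLoss x * (1 + Real.exp x) := by
    have := inv_le_ll x
    rw [div_le_iff₀ h1] at this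
    linarith
  rcases le_total x t with hxt | hxt
  · -- t ≥ x
    have htx : (0:ℝ) ≤ t - x := by linarith
    have habs : |t - x| = t - x := abs_of_nonneg htx
    have hnum : Real.exp t - Real.exp x ≤ Real.exp t * (t - x) := by
      have hle : x - t + 1 ≤ Real.exp (x - t) := Real.add_one_le_exp (x - t)
      have hprod : Real.exp (x - t) * Real.exp t = Real.exp x := by
        rw [← Real.exp_add]; ring_nf
      nlinarith [mul_le_mul_of_nonneg_right hle hb.le]
    have hnn : 0 ≤ llD t - llD x := llD_mono hxt |>.trans_eq rfl |> sub_nonneg.2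
    rw [habs, abs_of_nonneg hnn, llD_sub, div_le_iff₀ (by positivity)]
    nlinarith [mul_le_mul_of_nonneg_right hL1
        (mul_nonneg htx (by positivity : (0:ℝ) ≤ 1 + Real.exp t)),
      mul_le_mul_of_nonneg_right (show Real.exp t ≤ 1 + Real.exp t by linarith) htx]
  · -- t ≤ x
    have htx : (0:ℝ) ≤ x - t := by linarith
    have habs : |t - x| = x - t := by rw [abs_sub_comm]; exact abs_of_nonneg htx
    have hxt1 : x - t ≤ 1 := by rw [habs] at h; exact h
    have hnum : Real.exp x - Real.exp t ≤ Real.exp x * (x - t) := by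
      have hle : t - x + 1 ≤ Real.exp (t - x) := Real.add_one_le_exp (t - x)
      have hprod : Real.exp (t - x) * Real.exp x = Real.exp t := by
        rw [← Real.exp_add]; ring_nf
      nlinarith [mul_le_mul_of_nonneg_right hle ha.le]
    have hab : Real.exp x ≤ 3 * Real.exp t := by
      have : Real.exp x = Real.exp (x - t) * Real.exp t := by rw [← Real.exp_add]; ring_nf
      have h3 : Real.exp (x - t) ≤ Real.exp 1 := Real.exp_le_exp.2 hxt1
      have he : Real.exp 1 < 2.7182818286 := Real.exp_one_lt_d9
      nlinarith
    have hnn : 0 ≤ llD x - llD t := sub_nonneg.2 (llD_mono hxt)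
    have habs2 : |llD t - llD x| = llD x - llD t := by rw [abs_sub_comm]; exact abs_of_nonneg hnn
    rw [habs, habs2, llD_sub, div_le_iff₀ (by positivity)]
    nlinarith [mul_le_mul_of_nonneg_right hL1
        (mul_nonneg htx (by positivity : (0:ℝ) ≤ 1 + Real.exp t)),
      mul_le_mul_of_nonneg_right hab htx]


lemma llD_cont : Continuous llD := by
  apply Continuous.div continuous_const (by continuity)
  intro t
  have : (0:ℝ) < 1 + Real.exp t := by positivity
  exact this.ne'

theorem stmt_0 (x z : ℝ) (h : |z - x| < 1) :
    0 ≤ logisticLoss z - logisticLoss x - deriv logisticLoss x * (z - x) ∧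
    logisticLoss z - logisticLoss x - deriv logisticLoss x * (z - x)
      ≤ 2 * logisticLoss x * (z - x) ^ 2 := by
  have hint : ∀ a b : ℝ, IntervalIntegrable llD MeasureTheory.volume a b :=
    fun a b => llD_cont.intervalIntegrable a b
  have hFTC : ∀ a b : ℝ, (∫ t in a..b, llD t) = logisticLoss b - logisticLoss a :=
    fun a b => intervalIntegral.integral_eq_sub_of_hasDerivAt
      (fun t _ => hasDerivAt_ll t) (hint a b)
  have hintsub : ∀ a b : ℝ,
      IntervalIntegrable (fun t => llD t - llD x) MeasureTheory.volume a b :=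
    fun a b => (llD_cont.sub continuous_const).intervalIntegrable a b
  have hintlin : ∀ a b : ℝ,
      IntervalIntegrable (fun t => 4 * logisticLoss x * (t - x)) MeasureTheory.volume a b :=
    fun a b => (Continuous.mul continuous_const (by continuity)).intervalIntegrable a b
  have hE : logisticLoss z - logisticLoss x - deriv logisticLoss x * (z - x)
      = ∫ t in x..z, (llD t - llD x) := by
    rw [intervalIntegral.integral_sub (hint x z) (intervalIntegrable_const),
      hFTC, intervalIntegral.integral_const, deriv_ll, smul_eq_mul]
    ring
  have hL := ll_nonneg x
  rcases le_total x z with hxz | hxz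
  · have hib : ∀ t ∈ Set.Icc x z, llD t - llD x ≤ 4 * logisticLoss x * (t - x) := by
      intro t ht
      have h1 : |t - x| ≤ 1 := by
        rw [abs_of_nonneg (by linarith [ht.1])]
        have := abs_of_nonneg (show (0:ℝ) ≤ z - x by linarith)
        linarith [ht.2, this ▸ h]
      have := key_bound x t h1
      rw [abs_of_nonneg (show (0:ℝ) ≤ t - x by linarith [ht.1])] at this
      calc llD t - llD x ≤ |llD t - llD x| := le_abs_self _
        _ ≤ _ := this
    constructor
    · rw [hE]
      apply intervalIntegral.integral_nonneg hxz
      intro t ht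
      exact sub_nonneg.2 (llD_mono ht.1)
    · rw [hE]
      have hmono := intervalIntegral.integral_mono_on hxz (hintsub x z) (hintlin x z) hib
      have hcomp : (∫ t in x..z, 4 * logisticLoss x * (t - x))
          = 2 * logisticLoss x * (z - x) ^ 2 := by
        have hF : ∀ t : ℝ, HasDerivAt (fun t => 2 * logisticLoss x * (t - x) ^ 2)
            (4 * logisticLoss x * (t - x)) t := by
          intro t
          have := (((hasDerivAt_id t).sub_const x).pow 2).const_mul (2 * logisticLoss x)
          refine this.congr_deriv ?_
          simp; ring
        rw [intervalIntegral.integral_eq_sub_of_hasDerivAt (fun t _ => hF t) (hintlin x z)]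
        ring
      linarith [hcomp ▸ hmono]
  · -- z ≤ x
    have hsymm : (∫ t in x..z, (llD t - llD x))
        = ∫ t in z..x, (llD x - llD t) := by
      rw [intervalIntegral.integral_symm, ← intervalIntegral.integral_neg]
      congr 1; funext t; ring
    have hib : ∀ t ∈ Set.Icc z x, llD x - llD t ≤ 4 * logisticLoss x * (x - t) := by
      intro t ht
      have h1 : |t - x| ≤ 1 := by
        rw [abs_sub_comm, abs_of_nonneg (by linarith [ht.2])]
        have := abs_sub_comm z x ▸ h
        rw [abs_of_nonneg (show (0:ℝ) ≤ x - z by linarith)] at this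
        linarith [ht.1]
      have h2 := key_bound x t h1
      calc llD x - llD t ≤ |llD x - llD t| := le_abs_self _
        _ = |llD t - llD x| := abs_sub_comm _ _
        _ ≤ 4 * logisticLoss x * |t - x| := h2
        _ = 4 * logisticLoss x * (x - t) := by
            rw [abs_sub_comm, abs_of_nonneg (show (0:ℝ) ≤ x - t by linarith [ht.2])]
    constructor
    · rw [hE, hsymm]
      apply intervalIntegral.integral_nonneg hxz
      intro t ht
      exact sub_nonneg.2 (llD_mono ht.2)
    · rw [hE, hsymm]
      have hintsub2 : IntervalIntegrable (fun t => llD x - llD t) MeasureTheory.volume z x :=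
        (continuous_const.sub llD_cont).intervalIntegrable z x
      have hintlin2 : IntervalIntegrable (fun t => 4 * logisticLoss x * (x - t))
          MeasureTheory.volume z x :=
        (Continuous.mul continuous_const (by continuity)).intervalIntegrable z x
      have hmono := intervalIntegral.integral_mono_on hxz hintsub2 hintlin2 hib
      have hcomp : (∫ t in z..x, 4 * logisticLoss x * (x - t))
          = 2 * logisticLoss x * (z - x) ^ 2 := by
        have hF : ∀ t : ℝ, HasDerivAt (fun t => -(2 * logisticLoss x * (x - t) ^ 2))
            (4 * logisticLoss x * (x - t)) t := by
          intro t
          have := ((((hasDerivAt_id t).neg.const_add x).pow 2).const_mul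
            (2 * logisticLoss x)).neg
          refine this.congr_deriv ?_
          simp [sub_eq_add_neg]; ring
        rw [intervalIntegral.integral_eq_sub_of_hasDerivAt (fun t _ => hF t) (hintlin2)]
        ring
      linarith [hcomp ▸ hmono]
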